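/- arXiv:math/9712278 — 2 statements merged into one kernel-verified Lean document; each statement's English description precedes it below -/
import Mathlib

section
/- There exists a constant c ≥ 1 such that for every n ∈ ℕ and all points ξ₁, …, ξ_n, η₁, …, η_n in the flat torus T² = ℝ²/ℤ² (not necessarily distinct), the measure μ = Σ_{i=1}^n δ_{ξ_i} − Σ_{i=1}^n δ_{η_i} satisfies c⁻¹ min_{π ∈ S_n} Σ_{i=1}^n d(ξ_i, η_{π(i)}) ≤ ‖μ‖_{M¹(T²)} ≤ min_{π ∈ S_n} Σ_{i=1}^n d(ξ_i, η_{π(i)}), where the minimum is over all permutations π of {1, …, n} and d is the geodesic distance on T². -/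
noncomputable section

open MeasureTheory

/-- The flat torus `T² = ℝ²/ℤ²`. -/
abbrev T2 : Type := AddCircle (1:ℝ) × AddCircle (1:ℝ)

/-- The projection `ℝ² → T²`. -/
def proj (x : ℝ × ℝ) : T2 := ((x.1 : AddCircle (1:ℝ)), (x.2 : AddCircle (1:ℝ)))

/-- `φ : T² → ℝ` is of class `C¹`, witnessed by a `C¹` lift `ψ` to `ℝ²`. -/
def IsC1 (φ : T2 → ℝ) (ψ : ℝ × ℝ → ℝ) : Prop :=
  ContDiff ℝ 1 ψ ∧ ∀ x : ℝ × ℝ, φ (proj x) = ψ x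

/-- Integration of a (continuous) function against a finite signed measure, via the
Jordan decomposition. -/
def spair (μ : SignedMeasure T2) (φ : T2 → ℝ) : ℝ :=
  (∫ y, φ y ∂μ.toJordanDecomposition.posPart) -
    ∫ y, φ y ∂μ.toJordanDecomposition.negPart

/-- The `M¹(T²)` norm of a finite signed measure: the dual norm over
`C¹` test functions `φ` with `‖φ‖_∞ + ‖Dφ‖_∞ ≤ 1`. -/
def M1norm (μ : SignedMeasure T2) : ℝ :=
  sSup {r : ℝ | ∃ φ : T2 → ℝ, ∃ ψ : ℝ × ℝ → ℝ, IsC1 φ ψ ∧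
    (⨆ x : ℝ × ℝ, |ψ x|) + (⨆ x : ℝ × ℝ, ‖fderiv ℝ ψ x‖) ≤ 1 ∧ r = spair μ φ}

/-- The Dirac mass at a point of `T²`, as a signed measure. -/
def diracSM (p : T2) : SignedMeasure T2 := (Measure.dirac p).toSignedMeasure

/-- The geodesic distance on the flat torus `T² = ℝ²/ℤ²`: the Euclidean combination of
the (geodesic) distances in the two circle factors. -/
def gdist (p q : T2) : ℝ := Real.sqrt (dist p.1 q.1 ^ 2 + dist p.2 q.2 ^ 2)

open Function Topology
open scoped Convolution

instance fact01 : Fact ((0:ℝ) < 1) := ⟨zero_lt_one⟩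

lemma sqrt_sq_add_sq_eq_cabs (a b : ℝ) : Real.sqrt (a^2 + b^2) = ‖(⟨a, b⟩ : ℂ)‖ := by
  rw [Complex.norm_def, Complex.normSq_mk]; ring_nf

lemma sqrt_sq_add_sq_mono {a b a' b' : ℝ} (ha0 : 0 ≤ a) (hb0 : 0 ≤ b)
    (ha : a ≤ a') (hb : b ≤ b') : Real.sqrt (a^2 + b^2) ≤ Real.sqrt (a'^2 + b'^2) := by
  apply Real.sqrt_le_sqrt
  have := pow_le_pow_left₀ ha0 ha 2
  have := pow_le_pow_left₀ hb0 hb 2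
  linarith

lemma gdist_nonneg (p q : T2) : 0 ≤ gdist p q := Real.sqrt_nonneg _

lemma gdist_self (p : T2) : gdist p p = 0 := by simp [gdist]

lemma gdist_comm (p q : T2) : gdist p q = gdist q p := by
  simp [gdist, dist_comm]

lemma gdist_triangle (p q r : T2) : gdist p r ≤ gdist p q + gdist q r := by
  have h1 : gdist p r ≤ Real.sqrt ((dist p.1 q.1 + dist q.1 r.1)^2
      + (dist p.2 q.2 + dist q.2 r.2)^2) :=
    sqrt_sq_add_sq_mono dist_nonneg dist_nonneg (dist_triangle _ _ _) (dist_triangle _ _ _)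
  refine h1.trans ?_
  simp only [gdist]
  rw [sqrt_sq_add_sq_eq_cabs, sqrt_sq_add_sq_eq_cabs, sqrt_sq_add_sq_eq_cabs]
  have : (⟨dist p.1 q.1 + dist q.1 r.1, dist p.2 q.2 + dist q.2 r.2⟩ : ℂ)
      = (⟨dist p.1 q.1, dist p.2 q.2⟩ : ℂ) + (⟨dist q.1 r.1, dist q.2 r.2⟩ : ℂ) := by
    apply Complex.ext <;> simp
  rw [this]
  exact norm_add_le _ _

-- distance on the circle through representatives
lemma addCircle_norm_coe (x : ℝ) : ‖(x : AddCircle (1:ℝ))‖ = |x - round x| := by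
  rw [AddCircle.norm_eq]; norm_num

lemma addCircle_coe_sub (a b : ℝ) :
    ((a - b : ℝ) : AddCircle (1:ℝ)) = (a : AddCircle (1:ℝ)) - b := rfl

lemma addCircle_coe_int_eq_zero (m : ℤ) : ((m : ℝ) : AddCircle (1:ℝ)) = 0 := by
  rw [AddCircle.coe_eq_zero_iff]
  exact ⟨m, by simp⟩

lemma addCircle_coe_sub_int (a : ℝ) (m : ℤ) :
    ((a - m : ℝ) : AddCircle (1:ℝ)) = (a : AddCircle (1:ℝ)) := by
  rw [addCircle_coe_sub, addCircle_coe_int_eq_zero, sub_zero]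

lemma addCircle_dist_coe_le (a b : ℝ) :
    dist (a : AddCircle (1:ℝ)) (b : AddCircle (1:ℝ)) ≤ |a - b| := by
  rw [dist_eq_norm, ← addCircle_coe_sub]
  calc ‖((a - b : ℝ) : AddCircle (1:ℝ))‖ ≤ ‖a - b‖ := QuotientAddGroup.norm_mk_le_norm
    _ = |a - b| := rfl

lemma addCircle_dist_le_half (u v : AddCircle (1:ℝ)) : dist u v ≤ 1/2 := by
  induction u using QuotientAddGroup.induction_on with | H a =>
  induction v using QuotientAddGroup.induction_on with | H b =>
  rw [dist_eq_norm, ← addCircle_coe_sub, addCircle_norm_coe]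
  exact abs_sub_round _

lemma addCircle_exists_rep (u : AddCircle (1:ℝ)) (b : ℝ) :
    ∃ a : ℝ, (a : AddCircle (1:ℝ)) = u ∧ |a - b| = dist u (b : AddCircle (1:ℝ)) := by
  induction u using QuotientAddGroup.induction_on with | H c =>
  refine ⟨c - round (c - b), addCircle_coe_sub_int _ _, ?_⟩
  rw [dist_eq_norm, ← addCircle_coe_sub, addCircle_norm_coe]
  congr 1; ring

lemma gdist_le_one (p q : T2) : gdist p q ≤ 1 := by
  have h1 := addCircle_dist_le_half p.1 q.1
  have h2 := addCircle_dist_le_half p.2 q.2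
  have : gdist p q ≤ Real.sqrt ((1/2)^2 + (1/2)^2) :=
    sqrt_sq_add_sq_mono dist_nonneg dist_nonneg h1 h2
  refine this.trans ?_
  rw [show ((1:ℝ)/2)^2 + (1/2)^2 = 1/2 by norm_num]
  rw [show (1:ℝ) = Real.sqrt 1 by simp]
  exact Real.sqrt_le_sqrt (by norm_num)

-- gdist of projections vs Euclidean-combined real distance
lemma gdist_proj_le (a b : ℝ × ℝ) :
    gdist (proj a) (proj b) ≤ Real.sqrt (|a.1-b.1|^2 + |a.2-b.2|^2) := by
  exact sqrt_sq_add_sq_mono dist_nonneg dist_nonneg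
    (addCircle_dist_coe_le _ _) (addCircle_dist_coe_le _ _)

lemma sqrt_sq_add_sq_le_sqrt2_mul_max (a b : ℝ) :
    Real.sqrt (a^2 + b^2) ≤ Real.sqrt 2 * max |a| |b| := by
  have h1 : a^2 + b^2 ≤ 2 * (max |a| |b|)^2 := by
    have ha : a^2 ≤ (max |a| |b|)^2 := by
      have : |a| ≤ max |a| |b| := le_max_left _ _
      calc a^2 = |a|^2 := (sq_abs a).symm
        _ ≤ _ := pow_le_pow_left₀ (abs_nonneg a) this 2
    have hb : b^2 ≤ (max |a| |b|)^2 := by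
      have : |b| ≤ max |a| |b| := le_max_right _ _
      calc b^2 = |b|^2 := (sq_abs b).symm
        _ ≤ _ := pow_le_pow_left₀ (abs_nonneg b) this 2
    linarith
  calc Real.sqrt (a^2+b^2) ≤ Real.sqrt (2 * (max |a| |b|)^2) := Real.sqrt_le_sqrt h1
    _ = Real.sqrt 2 * max |a| |b| := by
        rw [Real.sqrt_mul (by norm_num)]
        congr 1
        exact Real.sqrt_sq (le_max_iff.2 (Or.inl (abs_nonneg a)))

lemma gdist_proj_le' (a b : ℝ × ℝ) :
    gdist (proj a) (proj b) ≤ Real.sqrt 2 * dist a b := by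
  refine (gdist_proj_le a b).trans ?_
  refine (sqrt_sq_add_sq_le_sqrt2_mul_max _ _).trans ?_
  rw [Prod.dist_eq]
  simp only [Real.dist_eq, abs_abs]
  exact le_refl _

lemma gdist_le_sqrt2_dist (p q : T2) : gdist p q ≤ Real.sqrt 2 * dist p q := by
  have h1 := sqrt_sq_add_sq_le_sqrt2_mul_max (dist p.1 q.1) (dist p.2 q.2)
  rw [abs_of_nonneg dist_nonneg, abs_of_nonneg dist_nonneg, ← Prod.dist_eq] at h1
  calc gdist p q = Real.sqrt (dist p.1 q.1 ^ 2 + dist p.2 q.2 ^ 2) := rfl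
    _ ≤ Real.sqrt 2 * dist p q := h1

section Potential

variable {n : ℕ} (x y : Fin n → T2)

/-- chain cost starting at `z` through partners indicated by the list -/
def gchain : List (Fin n) → T2 → ℝ
  | [], _ => 0
  | i :: L, z => gdist z (y i) - gdist (x i) (y i) + gchain L (x i)

lemma gchain_nil (z : T2) : gchain x y [] z = 0 := rfl

lemma gchain_cons (i : Fin n) (L : List (Fin n)) (z : T2) :
    gchain x y (i :: L) z = gdist z (y i) - gdist (x i) (y i) + gchain x y L (x i) := rfl

/-- endpoint of a chain -/
def epoint : List (Fin n) → T2 → T2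
  | [], z => z
  | i :: L, _ => epoint L (x i)

lemma gchain_append (A B : List (Fin n)) (z : T2) :
    gchain x y (A ++ B) z = gchain x y A z + gchain x y B (epoint x A z) := by
  induction A generalizing z with
  | nil => simp [gchain_nil, epoint]
  | cons i L ih => simp [gchain_cons, epoint, ih]; ring

lemma epoint_append_singleton (A : List (Fin n)) (i : Fin n) (z : T2) :
    epoint x (A ++ [i]) z = x i := by
  induction A generalizing z with
  | nil => rfl
  | cons j L ih => simp [epoint, ih]

lemma gchain_lip (L : List (Fin n)) (z w : T2) :
    gchain x y L z ≤ gchain x y L w + gdist z w := by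
  cases L with
  | nil => simp [gchain_nil, gdist_nonneg]
  | cons i L =>
    simp only [gchain_cons]
    have := gdist_triangle z w (y i)
    have := gdist_comm z w
    linarith [gdist_triangle z w (y i)]

lemma zip_append_of_le {α β : Type*} :
    ∀ (b : List β) (a : List α) (c : List α), b.length ≤ a.length →
      (a ++ c).zip b = a.zip b := by
  intro b
  induction b with
  | nil => intro a c _; simp
  | cons t b' ih =>
    intro a c h
    cases a with
    | nil => simp at h
    | cons s a' =>
      simp only [List.cons_append, List.zip_cons_cons]
      rw [ih a' c (by simpa using h)]

lemma gchain_zip_sum (B : List (Fin n)) (j : Fin n) :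
    gchain x y B (x j) = (((j :: B).zip B).map
      (fun p => gdist (x p.1) (y p.2) - gdist (x p.2) (y p.2))).sum := by
  induction B generalizing j with
  | nil => simp [gchain_nil]
  | cons k B' ih => simp [gchain_cons, List.zip_cons_cons, ih k]

/-- the fundamental inequality: cycles have nonnegative cost, assuming minimality -/
lemma cycle_nonneg
    (hmin : ∀ σ : Equiv.Perm (Fin n),
      (∑ j, gdist (x j) (y j)) ≤ ∑ j, gdist (x j) (y (σ j)))
    (i : Fin n) (A : List (Fin n)) (hl : (i :: A).Nodup) :
    0 ≤ gchain x y (A ++ [i]) (x i) := by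
  classical
  set l : List (Fin n) := i :: A with hldef
  have hlen : l.length = A.length + 1 := rfl
  haveI : NeZero l.length := ⟨by simp [hldef]⟩
  -- the cyclic permutation
  let e : Fin l.length ≃ {v // v ∈ l} := List.Nodup.getEquiv l hl
  let σ : Equiv.Perm (Fin n) := (finRotate (A.length + 1)).extendDomain e
  have hσget : ∀ k : Fin l.length, σ (l.get k) = l.get (k + 1) := by
    intro k
    have hmemk : l.get k ∈ l := l.get_mem _
    have h1 : σ (l.get k) = ↑(e ((finRotate (A.length + 1)) (e.symm ⟨l.get k, hmemk⟩))) :=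
      Equiv.Perm.extendDomain_apply_subtype _ e hmemk
    have h2 : e.symm ⟨l.get k, hmemk⟩ = k := by
      rw [Equiv.symm_apply_eq]
      apply Subtype.ext
      simp [e, List.Nodup.getEquiv]
    rw [h1, h2]
    have h3 : (finRotate (A.length + 1)) k = k + (1 : Fin l.length) := finRotate_succ_apply k
    rw [h3]
    simp [e, List.Nodup.getEquiv]
  have hσfix : ∀ j : Fin n, j ∉ l → σ j = j := fun j hj =>
    Equiv.Perm.extendDomain_apply_not_subtype _ e hj
  -- global inequality
  have hglob := hmin σ
  set F : Fin n → ℝ := fun j => gdist (x j) (y (σ j)) - gdist (x j) (y j) with hF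
  have h0 : 0 ≤ ∑ j, F j := by
    simp only [hF]
    rw [Finset.sum_sub_distrib]
    linarith
  have hsubset : ∑ j, F j = ∑ j ∈ l.toFinset, F j := by
    symm
    apply Finset.sum_subset (Finset.subset_univ _)
    intro j _ hj
    have : σ j = j := hσfix j (by simpa using hj)
    simp [hF, this]
  -- reindex over Fin l.length
  have hbij : ∑ j ∈ l.toFinset, F j = ∑ k : Fin l.length, F (l.get k) := by
    symm
    apply Finset.sum_bij (fun (k : Fin l.length) (_ : k ∈ Finset.univ) => l.get k)
    · intro k _
      exact List.mem_toFinset.mpr (l.get_mem _)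
    · intro k1 _ k2 _ h
      exact (List.Nodup.get_inj_iff hl).mp h
    · intro j hj
      obtain ⟨k, hk⟩ := List.mem_iff_get.mp (List.mem_toFinset.mp hj)
      exact ⟨k, Finset.mem_univ _, hk⟩
    · intro k _; rfl
  -- rewrite the sums
  have hswap : ∑ k : Fin l.length, gdist (x (l.get k)) (y (l.get k))
      = ∑ k : Fin l.length, gdist (x (l.get (k + 1))) (y (l.get (k + 1))) := by
    exact (Equiv.sum_comp (Equiv.addRight (1 : Fin l.length))
      (fun k => gdist (x (l.get k)) (y (l.get k)))).symm
  have hkey : 0 ≤ ∑ k : Fin l.length,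
      (gdist (x (l.get k)) (y (l.get (k + 1))) - gdist (x (l.get (k+1))) (y (l.get (k + 1)))) := by
    have heq : ∑ k : Fin l.length, F (l.get k)
        = ∑ k : Fin l.length,
          (gdist (x (l.get k)) (y (l.get (k+1))) - gdist (x (l.get k)) (y (l.get k))) := by
      apply Finset.sum_congr rfl
      intro k _
      simp only [hF, hσget k]
    rw [hsubset, hbij, heq] at h0
    rw [Finset.sum_sub_distrib] at h0 ⊢
    linarith [hswap]
  -- identify with the chain cost
  have hchain : gchain x y (A ++ [i]) (x i) = ∑ k : Fin l.length,
      (gdist (x (l.get k)) (y (l.get (k + 1))) - gdist (x (l.get (k+1))) (y (l.get (k + 1)))) := by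
    have hz : gchain x y (A ++ [i]) (x i) = (((i :: (A ++ [i])).zip (A ++ [i])).map
        (fun p => gdist (x p.1) (y p.2) - gdist (x p.2) (y p.2))).sum :=
      gchain_zip_sum x y (A ++ [i]) i
    have hzip1 : (i :: (A ++ [i])).zip (A ++ [i]) = l.zip (A ++ [i]) := by
      have h4 : i :: (A ++ [i]) = l ++ [i] := by simp [hldef]
      rw [h4]
      exact zip_append_of_le (A ++ [i]) l [i] (by simp [hldef])
    have hrot : A ++ [i] = l.rotate 1 := by
      rw [hldef, List.rotate_cons_succ, List.rotate_zero]
    have hzip2 : l.zip (l.rotate 1) = (List.finRange l.length).map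
        (fun k => (l.get k, l.get (k + 1))) := by
      apply List.ext_getElem
      · simp [hldef]
      · intro k h1 h2
        rw [List.getElem_zip, List.getElem_map, List.getElem_rotate]
        simp only [List.getElem_finRange, List.get_eq_getElem, Prod.mk.injEq, Fin.add_def,
          Fin.val_one, Fin.cast_mk]
        constructor
        · trivial
        · congr 1
          rw [Fin.val_one', Nat.add_mod k 1, Nat.add_mod k (1 % l.length),
            Nat.mod_mod_of_dvd 1 dvd_rfl]
    rw [hz, hzip1, hrot, hzip2, List.map_map, ← Fin.sum_univ_def]
    apply Finset.sum_congr rfl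
    intro k _
    simp
  rw [hchain]
  exact hkey


def chainSet (z : T2) : Set ℝ := {r | ∃ L : List (Fin n), L.Nodup ∧ gchain x y L z = r}

lemma chainSet_nonempty (z : T2) : (chainSet x y z).Nonempty :=
  ⟨0, [], List.nodup_nil, rfl⟩

lemma chainSet_finite (z : T2) : (chainSet x y z).Finite := by
  apply Set.Finite.subset (Set.Finite.image (fun L => gchain x y L z)
    (List.finite_length_le (Fin n) n))
  rintro r ⟨L, hL, rfl⟩
  exact ⟨L, by simpa using hL.length_le_card, rfl⟩

def pot (z : T2) : ℝ := sInf (chainSet x y z)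

lemma pot_mem (z : T2) : pot x y z ∈ chainSet x y z :=
  Set.Nonempty.csInf_mem (chainSet_nonempty x y z) (chainSet_finite x y z)

lemma pot_le (z : T2) (L : List (Fin n)) (hL : L.Nodup) : pot x y z ≤ gchain x y L z :=
  csInf_le (chainSet_finite x y z).bddBelow ⟨L, hL, rfl⟩

lemma pot_lip (z w : T2) : pot x y z ≤ pot x y w + gdist z w := by
  obtain ⟨L, hL, hval⟩ := pot_mem x y w
  calc pot x y z ≤ gchain x y L z := pot_le x y z L hL
    _ ≤ gchain x y L w + gdist z w := gchain_lip x y L z w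
    _ = pot x y w + gdist z w := by rw [hval]

lemma pot_key
    (hmin : ∀ σ : Equiv.Perm (Fin n),
      (∑ j, gdist (x j) (y j)) ≤ ∑ j, gdist (x j) (y (σ j)))
    (z : T2) (i : Fin n) :
    pot x y z ≤ gdist z (y i) - gdist (x i) (y i) + pot x y (x i) := by
  obtain ⟨L, hL, hval⟩ := pot_mem x y (x i)
  by_cases hi : i ∈ L
  · obtain ⟨s, t, rfl⟩ := List.append_of_mem hi
    rw [List.nodup_append] at hL
    obtain ⟨hs, hit, hdisj⟩ := hL
    have hins : i ∉ s := fun h => hdisj i h i List.mem_cons_self rfl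
    have hit' : t.Nodup := (List.nodup_cons.mp hit).2
    have hint : i ∉ t := (List.nodup_cons.mp hit).1
    have hcand : (i :: t).Nodup := List.nodup_cons.mpr ⟨hint, hit'⟩
    have hcyc : 0 ≤ gchain x y (s ++ [i]) (x i) :=
      cycle_nonneg x y hmin i s (List.nodup_cons.mpr ⟨hins, hs⟩)
    have hsplit : gchain x y (s ++ i :: t) (x i)
        = gchain x y (s ++ [i]) (x i) + gchain x y t (x i) := by
      have h6 : s ++ i :: t = (s ++ [i]) ++ t := by simp
      rw [h6, gchain_append, epoint_append_singleton]
    calc pot x y z ≤ gchain x y (i :: t) z := pot_le x y z _ hcand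
      _ = gdist z (y i) - gdist (x i) (y i) + gchain x y t (x i) := gchain_cons x y i t z
      _ ≤ gdist z (y i) - gdist (x i) (y i)
          + (gchain x y (s ++ [i]) (x i) + gchain x y t (x i)) := by linarith
      _ = gdist z (y i) - gdist (x i) (y i) + gchain x y (s ++ i :: t) (x i) := by
          rw [hsplit]
      _ = gdist z (y i) - gdist (x i) (y i) + pot x y (x i) := by rw [hval]
  · have hcand : (i :: L).Nodup := List.nodup_cons.mpr ⟨hi, hL⟩
    calc pot x y z ≤ gchain x y (i :: L) z := pot_le x y z _ hcand
      _ = gdist z (y i) - gdist (x i) (y i) + gchain x y L (x i) := gchain_cons x y i L z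
      _ = gdist z (y i) - gdist (x i) (y i) + pot x y (x i) := by rw [hval]

theorem exists_potential
    (hmin : ∀ σ : Equiv.Perm (Fin n),
      (∑ j, gdist (x j) (y j)) ≤ ∑ j, gdist (x j) (y (σ j))) :
    ∃ φ : T2 → ℝ,
      (∀ p q, |φ p - φ q| ≤ gdist p q) ∧
      (∑ i, gdist (x i) (y i)) ≤ (∑ i, φ (x i)) - ∑ i, φ (y i) := by
  refine ⟨pot x y, fun p q => ?_, ?_⟩
  · rw [abs_le]
    constructor
    · have := pot_lip x y q p
      have := gdist_comm q p
      linarith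
    · linarith [pot_lip x y p q]
  · have h7 : ∀ i, gdist (x i) (y i) ≤ pot x y (x i) - pot x y (y i) := by
      intro i
      have := pot_key x y hmin (y i) i
      rw [gdist_self] at this
      linarith
    rw [← Finset.sum_sub_distrib]
    exact Finset.sum_le_sum fun i _ => h7 i

end Potential
lemma proj_sub (a b : ℝ × ℝ) : proj (a - b) = proj a - proj b := by
  apply Prod.ext
  · exact QuotientAddGroup.mk_sub _ _ _
  · exact QuotientAddGroup.mk_sub _ _ _

lemma continuous_proj : Continuous proj := by
  apply Continuous.prodMk
  · exact (AddCircle.continuous_mk' (1:ℝ)).comp continuous_fst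
  · exact (AddCircle.continuous_mk' (1:ℝ)).comp continuous_snd

lemma surjective_proj : Function.Surjective proj := by
  rintro ⟨u, v⟩
  induction u using QuotientAddGroup.induction_on with | H a =>
  induction v using QuotientAddGroup.induction_on with | H b =>
  exact ⟨(a, b), rfl⟩

lemma isOpenMap_proj : IsOpenMap proj := by
  have h1 : IsOpenMap (fun a : ℝ => (a : AddCircle (1:ℝ))) := QuotientAddGroup.isOpenMap_coe
  exact h1.prodMap h1

lemma isQuotientMap_proj : IsQuotientMap proj :=
  isOpenMap_proj.isQuotientMap continuous_proj surjective_proj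

/-- representative of a point of the torus -/
def rep (p : T2) : ℝ × ℝ :=
  (((AddCircle.equivIco 1 0 p.1 : Set.Ico (0:ℝ) (0+1)) : ℝ),
   ((AddCircle.equivIco 1 0 p.2 : Set.Ico (0:ℝ) (0+1)) : ℝ))

lemma proj_rep (p : T2) : proj (rep p) = p := by
  apply Prod.ext
  · exact (AddCircle.equivIco 1 0).symm_apply_apply p.1
  · exact (AddCircle.equivIco 1 0).symm_apply_apply p.2

/-- the mollification lemma -/
lemma mollify (χ : T2 → ℝ) (hχc : Continuous χ) (K : ℝ) (hK : 0 ≤ K)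
    (hLip : ∀ p q, |χ p - χ q| ≤ K * gdist p q) (C : ℝ) (hbd : ∀ p, |χ p| ≤ C)
    (r : ℝ) (hr : 0 < r) :
    ∃ (φ : T2 → ℝ) (ψ : ℝ × ℝ → ℝ), IsC1 φ ψ ∧ Continuous φ ∧
      (∀ x, |ψ x| ≤ C) ∧ (∀ x, ‖fderiv ℝ ψ x‖ ≤ Real.sqrt 2 * K) ∧
      (∀ p, |φ p - χ p| ≤ Real.sqrt 2 * K * r) := by
  -- the 1D bump
  set b1 : ContDiffBump (0:ℝ) := ⟨r/2, r, by positivity, by linarith⟩ with hb1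
  set ρ : ℝ × ℝ → ℝ := fun t => b1.normed volume t.1 * b1.normed volume t.2 with hρ
  have hρc : Continuous ρ :=
    (b1.continuous_normed.comp continuous_fst).mul (b1.continuous_normed.comp continuous_snd)
  have hρsm : ContDiff ℝ 1 ρ :=
    (b1.contDiff_normed.comp contDiff_fst).mul (b1.contDiff_normed.comp contDiff_snd)
  have hρnn : ∀ t, 0 ≤ ρ t := fun t => mul_nonneg (b1.nonneg_normed _) (b1.nonneg_normed _)
  have hρsupp : ∀ t : ℝ × ℝ, ρ t ≠ 0 → ‖t‖ < r := by
    intro t ht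
    have h1 : b1.normed volume t.1 ≠ 0 := fun h => ht (by rw [hρ]; simp [h])
    have h2 : b1.normed volume t.2 ≠ 0 := fun h => ht (by rw [hρ]; simp [h])
    have h1' : t.1 ∈ Metric.ball (0:ℝ) r := by
      have := Function.mem_support.mpr h1
      rwa [b1.support_normed_eq] at this
    have h2' : t.2 ∈ Metric.ball (0:ℝ) r := by
      have := Function.mem_support.mpr h2
      rwa [b1.support_normed_eq] at this
    rw [Metric.mem_ball, dist_zero_right] at h1' h2'
    rw [Prod.norm_def]
    exact max_lt h1' h2'
  have hρcs : HasCompactSupport ρ := by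
    apply HasCompactSupport.intro (K := Metric.closedBall (0:ℝ) r ×ˢ Metric.closedBall (0:ℝ) r)
      ((isCompact_closedBall _ _).prod (isCompact_closedBall _ _))
    intro t ht
    by_contra h
    have := hρsupp t h
    apply ht
    rw [Set.mem_prod, Metric.mem_closedBall, Metric.mem_closedBall,
      dist_zero_right, dist_zero_right]
    rw [Prod.norm_def] at this
    constructor
    · exact le_of_lt ((le_max_left _ _).trans_lt this)
    · exact le_of_lt ((le_max_right _ _).trans_lt this)
  have hρint : Integrable ρ volume := hρc.integrable_of_hasCompactSupport hρcs
  have hρone : ∫ t, ρ t = 1 := by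
    rw [hρ]
    rw [MeasureTheory.Measure.volume_eq_prod, MeasureTheory.integral_prod_mul]
    rw [b1.integral_normed]
    norm_num
  -- the lifted function
  set ψ₀ : ℝ × ℝ → ℝ := χ ∘ proj with hψ₀
  have hψ₀c : Continuous ψ₀ := hχc.comp continuous_proj
  have hψ₀per : ∀ a b : ℝ × ℝ, proj a = proj b → ψ₀ a = ψ₀ b := by
    intro a b h; simp only [hψ₀, Function.comp_apply, h]
  have hψ₀lip : ∀ a b, |ψ₀ a - ψ₀ b| ≤ Real.sqrt 2 * K * dist a b := by
    intro a b
    calc |ψ₀ a - ψ₀ b| ≤ K * gdist (proj a) (proj b) := hLip _ _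
      _ ≤ K * (Real.sqrt 2 * dist a b) := by
          apply mul_le_mul_of_nonneg_left (gdist_proj_le' a b) hK
      _ = Real.sqrt 2 * K * dist a b := by ring
  have hψ₀bd : ∀ t, |ψ₀ t| ≤ C := fun t => hbd _
  -- the convolution
  set ψ : ℝ × ℝ → ℝ := ρ ⋆[ContinuousLinearMap.lsmul ℝ ℝ, volume] ψ₀ with hψdef
  have hψeq : ∀ x, ψ x = ∫ t, ρ t * ψ₀ (x - t) := by
    intro x
    rw [hψdef, MeasureTheory.convolution_def]
    simp [smul_eq_mul]
  have hψc1 : ContDiff ℝ 1 ψ :=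
    hρcs.contDiff_convolution_left _ hρsm (hψ₀c.locallyIntegrable)
  -- integrability helper
  have hint : ∀ w : ℝ × ℝ → ℝ, Continuous w → Integrable (fun t => ρ t * w t) volume := by
    intro w hw
    exact (hρc.mul hw).integrable_of_hasCompactSupport (hρcs.mul_right)
  -- bound helper
  have hbound : ∀ (u : ℝ × ℝ → ℝ), Continuous u → ∀ M : ℝ, 0 ≤ M →
      (∀ t, ρ t ≠ 0 → |u t| ≤ M) → |∫ t, ρ t * u t| ≤ M := by
    intro u hu M hM hbd'
    have h1 : |∫ t, ρ t * u t| ≤ ∫ t, |ρ t * u t| := by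
      have := norm_integral_le_integral_norm (μ := volume) (fun t => ρ t * u t)
      simpa only [Real.norm_eq_abs] using this
    have h2 : ∫ t, |ρ t * u t| ≤ ∫ t, ρ t * M := by
      apply integral_mono ((hint u hu).abs) (hρint.mul_const M)
      intro t
      dsimp only
      by_cases h : ρ t = 0
      · simp [h]
      · rw [abs_mul, abs_of_nonneg (hρnn t)]
        exact mul_le_mul_of_nonneg_left (hbd' t h) (hρnn t)
    have h3 : ∫ t, ρ t * M = M := by
      rw [MeasureTheory.integral_mul_const, hρone, one_mul]
    linarith
  have hcont : ∀ v : ℝ × ℝ, Continuous (fun t : ℝ × ℝ => ψ₀ (v - t)) :=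
    fun v => hψ₀c.comp (continuous_const.sub continuous_id)
  -- sup bound
  have hψbd : ∀ x, |ψ x| ≤ C := by
    intro x
    rw [hψeq x]
    have hC : 0 ≤ C := le_trans (abs_nonneg _) (hbd (proj 0))
    exact hbound (fun t => ψ₀ (x - t)) (hcont x) C hC fun t _ => hψ₀bd _
  -- Lipschitz bound
  have hψlip : ∀ a b, |ψ a - ψ b| ≤ Real.sqrt 2 * K * dist a b := by
    intro a b
    have hsub : ψ a - ψ b = ∫ t, ρ t * (ψ₀ (a - t) - ψ₀ (b - t)) := by
      rw [hψeq a, hψeq b, ← MeasureTheory.integral_sub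
        (hint (fun t => ψ₀ (a - t)) (hcont a)) (hint (fun t => ψ₀ (b - t)) (hcont b))]
      congr 1; funext t; ring
    rw [hsub]
    refine hbound (fun t => ψ₀ (a - t) - ψ₀ (b - t)) ((hcont a).sub (hcont b))
      (Real.sqrt 2 * K * dist a b) (by positivity) ?_
    intro t _
    calc |ψ₀ (a - t) - ψ₀ (b - t)| ≤ Real.sqrt 2 * K * dist (a - t) (b - t) := hψ₀lip _ _
      _ = Real.sqrt 2 * K * dist a b := by rw [dist_sub_right]
  -- derivative bound
  have hψder : ∀ x, ‖fderiv ℝ ψ x‖ ≤ Real.sqrt 2 * K := by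
    intro x
    have hlip : LipschitzWith (Real.toNNReal (Real.sqrt 2 * K)) ψ := by
      apply LipschitzWith.of_dist_le_mul
      intro a b
      rw [Real.coe_toNNReal _ (by positivity), Real.dist_eq]
      exact hψlip a b
    have h9 := norm_fderiv_le_of_lipschitz ℝ hlip (x₀ := x)
    rwa [Real.coe_toNNReal _ (by positivity)] at h9
  -- approximation bound
  have hψapprox : ∀ x, |ψ x - ψ₀ x| ≤ Real.sqrt 2 * K * r := by
    intro x
    have hsub : ψ x - ψ₀ x = ∫ t, ρ t * (ψ₀ (x - t) - ψ₀ x) := by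
      have h4 : ∫ t : ℝ × ℝ, ρ t * ψ₀ x = ψ₀ x := by
        rw [MeasureTheory.integral_mul_const, hρone, one_mul]
      have h8 := (MeasureTheory.integral_sub
        (hint (fun t => ψ₀ (x - t)) (hcont x)) (hρint.mul_const (ψ₀ x))).symm
      rw [hψeq x]
      calc (∫ t, ρ t * ψ₀ (x - t)) - ψ₀ x
          = (∫ t, ρ t * ψ₀ (x - t)) - ∫ t : ℝ × ℝ, ρ t * ψ₀ x := by rw [h4]
        _ = ∫ t, (ρ t * ψ₀ (x - t) - ρ t * ψ₀ x) := h8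
        _ = ∫ t, ρ t * (ψ₀ (x - t) - ψ₀ x) := by congr 1; funext t; ring
    rw [hsub]
    refine hbound (fun t => ψ₀ (x - t) - ψ₀ x) ((hcont x).sub continuous_const)
      (Real.sqrt 2 * K * r) (by positivity) ?_
    intro t ht
    calc |ψ₀ (x - t) - ψ₀ x| ≤ Real.sqrt 2 * K * dist (x - t) x := hψ₀lip _ _
      _ ≤ Real.sqrt 2 * K * r := by
          apply mul_le_mul_of_nonneg_left _ (by positivity)
          rw [dist_eq_norm]
          have h5 : x - t - x = -t := by ring
          rw [h5, norm_neg]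
          exact le_of_lt (hρsupp t ht)
  -- periodicity invariance of ψ
  have hψinv : ∀ a b : ℝ × ℝ, proj a = proj b → ψ a = ψ b := by
    intro a b h
    rw [hψeq a, hψeq b]
    congr 1; funext t
    congr 1
    apply hψ₀per
    rw [proj_sub, proj_sub, h]
  -- the descended function
  refine ⟨fun p => ψ (rep p), ψ, ⟨hψc1, fun x => hψinv _ _ (by rw [proj_rep])⟩, ?_, hψbd,
    hψder, ?_⟩
  · rw [isQuotientMap_proj.continuous_iff]
    have h6 : (fun p => ψ (rep p)) ∘ proj = ψ := by
      funext x
      exact hψinv _ _ (by rw [proj_rep])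
    rw [h6]
    exact hψc1.continuous
  · intro p
    have h7 : χ p = ψ₀ (rep p) := by
      rw [hψ₀]
      simp only [Function.comp_apply]
      rw [proj_rep]
    rw [h7]
    exact hψapprox (rep p)

lemma integrable_of_continuous (φ : T2 → ℝ) (hφ : Continuous φ) (μ : Measure T2)
    [IsFiniteMeasure μ] : Integrable φ μ := by
  apply hφ.integrable_of_hasCompactSupport
  exact IsCompact.of_isClosed_subset isCompact_univ (isClosed_tsupport φ) (Set.subset_univ _)

lemma spair_toSignedMeasure_sub (A B : Measure T2) [IsFiniteMeasure A] [IsFiniteMeasure B]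
    (φ : T2 → ℝ) (hφ : Continuous φ) :
    spair (A.toSignedMeasure - B.toSignedMeasure) φ = (∫ p, φ p ∂A) - ∫ p, φ p ∂B := by
  set s := A.toSignedMeasure - B.toSignedMeasure with hs
  set P := s.toJordanDecomposition.posPart with hP
  set N := s.toJordanDecomposition.negPart with hN
  have hPN : P.toSignedMeasure - N.toSignedMeasure = s :=
    SignedMeasure.toSignedMeasure_toJordanDecomposition s
  have hmeas : A + N = P + B := by
    ext u hu
    have h1 : (P.toSignedMeasure - N.toSignedMeasure) u
        = (A.toSignedMeasure - B.toSignedMeasure) u := by rw [hPN]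
    rw [VectorMeasure.sub_apply, VectorMeasure.sub_apply,
      Measure.toSignedMeasure_apply_measurable hu, Measure.toSignedMeasure_apply_measurable hu,
      Measure.toSignedMeasure_apply_measurable hu, Measure.toSignedMeasure_apply_measurable hu]
      at h1
    have hA : A u ≠ ⊤ := measure_ne_top _ _
    have hB : B u ≠ ⊤ := measure_ne_top _ _
    have hPu : P u ≠ ⊤ := measure_ne_top _ _
    have hNu : N u ≠ ⊤ := measure_ne_top _ _
    rw [Measure.add_apply, Measure.add_apply]
    have h2 : (A u + N u).toReal = (P u + B u).toReal := by
      rw [ENNReal.toReal_add hA hNu, ENNReal.toReal_add hPu hB]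
      simp only [measureReal_def] at h1
      linarith
    exact (ENNReal.toReal_eq_toReal_iff' (by simp [hA, hNu]) (by simp [hPu, hB])).mp h2
  have hint : ∫ p, φ p ∂(A + N) = ∫ p, φ p ∂(P + B) := by rw [hmeas]
  rw [integral_add_measure (integrable_of_continuous φ hφ A) (integrable_of_continuous φ hφ N),
    integral_add_measure (integrable_of_continuous φ hφ P) (integrable_of_continuous φ hφ B)]
    at hint
  simp only [spair, ← hP, ← hN]
  linarith

lemma isFiniteMeasure_sum {n : ℕ} (f : Fin n → Measure T2) (h : ∀ i, IsFiniteMeasure (f i)) :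
    IsFiniteMeasure (∑ i, f i) := by
  constructor
  rw [Measure.finset_sum_apply]
  exact ENNReal.sum_lt_top.mpr fun i _ => measure_lt_top _ _

lemma sum_diracSM_eq {n : ℕ} (ξ : Fin n → T2) :
    (∑ i, diracSM (ξ i)) = (∑ i, Measure.dirac (ξ i)).toSignedMeasure := by
  haveI := isFiniteMeasure_sum (fun i => Measure.dirac (ξ i)) (fun i => by infer_instance)
  ext u hu
  have hcoe : (∑ i, diracSM (ξ i)) u = ∑ i, (diracSM (ξ i)) u := by
    have := map_sum (VectorMeasure.coeFnAddMonoidHom (VectorMeasure T2 ℝ) (Set T2) ℝ)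
      (fun i => diracSM (ξ i)) Finset.univ
    calc (∑ i, diracSM (ξ i)) u = (VectorMeasure.coeFnAddMonoidHom (VectorMeasure T2 ℝ) (Set T2) ℝ
          (∑ i, diracSM (ξ i))) u := rfl
      _ = ∑ i, (diracSM (ξ i)) u := by rw [this, Finset.sum_apply]; rfl
  rw [Measure.toSignedMeasure_apply_measurable hu, hcoe, measureReal_def, Measure.finset_sum_apply]
  rw [ENNReal.toReal_sum (fun i _ => measure_ne_top _ _)]
  apply Finset.sum_congr rfl
  intro i _
  rw [diracSM, Measure.toSignedMeasure_apply_measurable hu, measureReal_def]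

lemma integral_sum_dirac {n : ℕ} (ξ : Fin n → T2) (φ : T2 → ℝ) (hφ : Continuous φ) :
    ∫ p, φ p ∂(∑ i, Measure.dirac (ξ i)) = ∑ i, φ (ξ i) := by
  rw [integral_finset_sum_measure (fun i _ => integrable_of_continuous φ hφ _)]
  apply Finset.sum_congr rfl
  intro i _
  exact integral_dirac' φ (ξ i) hφ.stronglyMeasurable

lemma spair_dirac_sums {n : ℕ} (ξ η : Fin n → T2) (φ : T2 → ℝ) (hφ : Continuous φ) :
    spair ((∑ i, diracSM (ξ i)) - ∑ i, diracSM (η i)) φ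
      = (∑ i, φ (ξ i)) - ∑ i, φ (η i) := by
  haveI := isFiniteMeasure_sum (fun i => Measure.dirac (ξ i)) (fun i => by infer_instance)
  haveI := isFiniteMeasure_sum (fun i => Measure.dirac (η i)) (fun i => by infer_instance)
  rw [sum_diracSM_eq ξ, sum_diracSM_eq η,
    spair_toSignedMeasure_sub _ _ φ hφ, integral_sum_dirac ξ φ hφ, integral_sum_dirac η φ hφ]

-- E1: periodicity of lifts
lemma proj_add (a b : ℝ × ℝ) : proj (a + b) = proj a + proj b := by
  apply Prod.ext
  · exact QuotientAddGroup.mk_add _ _ _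
  · exact QuotientAddGroup.mk_add _ _ _

lemma psi_periodic {φ : T2 → ℝ} {ψ : ℝ × ℝ → ℝ} (h1 : IsC1 φ ψ) (x v : ℝ × ℝ)
    (hv : proj v = 0) : ψ (x + v) = ψ x := by
  rw [← h1.2, ← h1.2, proj_add, hv, add_zero]

lemma fderiv_psi_periodic {φ : T2 → ℝ} {ψ : ℝ × ℝ → ℝ} (h1 : IsC1 φ ψ) (x v : ℝ × ℝ)
    (hv : proj v = 0) : fderiv ℝ ψ (x + v) = fderiv ℝ ψ x := by
  have hdiff : Differentiable ℝ ψ := h1.1.differentiable one_ne_zero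
  have hfun : (fun z : ℝ × ℝ => ψ (z + v)) = ψ := funext fun z => psi_periodic h1 z v hv
  have hd : HasFDerivAt ψ (fderiv ℝ ψ (x + v)) (x + v) := (hdiff (x + v)).hasFDerivAt
  have hcomp : HasFDerivAt (fun z : ℝ × ℝ => ψ (z + v)) (fderiv ℝ ψ (x + v)) x := by
    have h2 := hd.comp x ((hasFDerivAt_id x).add_const v)
    exact h2
  rw [hfun] at hcomp
  exact (hcomp.fderiv).symm

/-- the key upper bound -/
lemma spair_le_matching {n : ℕ} (ξ η : Fin n → T2) (φ : T2 → ℝ) (ψ : ℝ × ℝ → ℝ)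
    (h1 : IsC1 φ ψ)
    (h2 : (⨆ x : ℝ × ℝ, |ψ x|) + (⨆ x : ℝ × ℝ, ‖fderiv ℝ ψ x‖) ≤ 1)
    (π : Equiv.Perm (Fin n)) :
    spair ((∑ i, diracSM (ξ i)) - ∑ i, diracSM (η i)) φ ≤ ∑ i, gdist (ξ i) (η (π i)) := by
  have hψc : Continuous ψ := h1.1.continuous
  have hφproj : φ ∘ proj = ψ := funext h1.2
  have hφc : Continuous φ := by
    rw [isQuotientMap_proj.continuous_iff, hφproj]; exact hψc
  have hdiff : Differentiable ℝ ψ := h1.1.differentiable one_ne_zero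
  -- reduction to the box
  have hred : ∀ x : ℝ × ℝ, ∃ z ∈ Set.Icc ((0:ℝ), (0:ℝ)) (1, 1),
      ψ z = ψ x ∧ fderiv ℝ ψ z = fderiv ℝ ψ x := by
    intro x
    set z : ℝ × ℝ := (Int.fract x.1, Int.fract x.2) with hz
    set v : ℝ × ℝ := ((⌊x.1⌋ : ℝ), (⌊x.2⌋ : ℝ)) with hv
    have hxzv : z + v = x := by
      apply Prod.ext
      · exact Int.fract_add_floor x.1
      · exact Int.fract_add_floor x.2
    have hv0 : proj v = 0 := by
      apply Prod.ext
      · exact addCircle_coe_int_eq_zero _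
      · exact addCircle_coe_int_eq_zero _
    refine ⟨z, ?_, ?_, ?_⟩
    · constructor
      · rw [Prod.le_def]
        exact ⟨Int.fract_nonneg _, Int.fract_nonneg _⟩
      · rw [Prod.le_def]
        exact ⟨(Int.fract_lt_one _).le, (Int.fract_lt_one _).le⟩
    · rw [← hxzv]; exact (psi_periodic h1 z v hv0).symm
    · rw [← hxzv]; exact (fderiv_psi_periodic h1 z v hv0).symm
  have hbd1 : BddAbove (Set.range fun x : ℝ × ℝ => |ψ x|) := by
    refine BddAbove.mono ?_ (((isCompact_Icc (a := ((0:ℝ),(0:ℝ))) (b := (1,1))).image hψc.abs).bddAbove)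
    rintro _ ⟨x, rfl⟩
    obtain ⟨z, hzbox, hz1, _⟩ := hred x
    exact ⟨z, hzbox, by simp [hz1]⟩
  have hfdc : Continuous fun x => ‖fderiv ℝ ψ x‖ := (h1.1.continuous_fderiv one_ne_zero).norm
  have hbd2 : BddAbove (Set.range fun x : ℝ × ℝ => ‖fderiv ℝ ψ x‖) := by
    refine BddAbove.mono ?_ (((isCompact_Icc (a := ((0:ℝ),(0:ℝ))) (b := (1,1))).image hfdc).bddAbove)
    rintro _ ⟨x, rfl⟩
    obtain ⟨z, hzbox, _, hz2⟩ := hred x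
    exact ⟨z, hzbox, by simp [hz2]⟩
  set S := ⨆ x : ℝ × ℝ, |ψ x| with hS
  set L := ⨆ x : ℝ × ℝ, ‖fderiv ℝ ψ x‖ with hL
  have hLx : ∀ x, ‖fderiv ℝ ψ x‖ ≤ L := fun x => le_ciSup hbd2 x
  have hS0 : 0 ≤ S := le_trans (abs_nonneg _) (le_ciSup hbd1 0)
  have hL0 : 0 ≤ L := le_trans (norm_nonneg _) (hLx 0)
  have hL1 : L ≤ 1 := by linarith
  -- Lipschitz estimate for φ
  have hLip : ∀ p q : T2, |φ p - φ q| ≤ L * gdist p q := by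
    intro p q
    set b := rep q with hb
    have hbq : proj b = q := proj_rep q
    have hb1 : ((b.1 : ℝ) : AddCircle (1:ℝ)) = q.1 := congrArg Prod.fst hbq
    have hb2 : ((b.2 : ℝ) : AddCircle (1:ℝ)) = q.2 := congrArg Prod.snd hbq
    obtain ⟨a1, ha1c, ha1d⟩ := addCircle_exists_rep p.1 b.1
    obtain ⟨a2, ha2c, ha2d⟩ := addCircle_exists_rep p.2 b.2
    set a : ℝ × ℝ := (a1, a2) with ha
    have hap : proj a = p := Prod.ext ha1c ha2c
    have hφψ : φ p - φ q = ψ a - ψ b := by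
      rw [← hap, ← hbq, h1.2, h1.2]
    rw [hφψ]
    have hmvt : ‖ψ a - ψ b‖ ≤ L * ‖a - b‖ := by
      apply Convex.norm_image_sub_le_of_norm_fderiv_le
        (fun x _ => hdiff x) (fun x _ => hLx x) convex_univ
        (Set.mem_univ b) (Set.mem_univ a)
    have hnorm : ‖a - b‖ ≤ gdist p q := by
      rw [Prod.norm_def]
      have h3 : ‖(a - b).1‖ = dist p.1 q.1 := by
        rw [← hb1, ← ha1d]
        simp [ha, Real.norm_eq_abs]
      have h4 : ‖(a - b).2‖ = dist p.2 q.2 := by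
        rw [← hb2, ← ha2d]
        simp [ha, Real.norm_eq_abs]
      rw [h3, h4]
      apply max_le
      · calc dist p.1 q.1 = Real.sqrt ((dist p.1 q.1)^2) := (Real.sqrt_sq dist_nonneg).symm
          _ ≤ gdist p q := Real.sqrt_le_sqrt (by nlinarith [sq_nonneg (dist p.2 q.2)])
      · calc dist p.2 q.2 = Real.sqrt ((dist p.2 q.2)^2) := (Real.sqrt_sq dist_nonneg).symm
          _ ≤ gdist p q := Real.sqrt_le_sqrt (by nlinarith [sq_nonneg (dist p.1 q.1)])
    calc |ψ a - ψ b| ≤ L * ‖a - b‖ := hmvt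
      _ ≤ L * gdist p q := mul_le_mul_of_nonneg_left hnorm hL0
  -- conclude
  rw [spair_dirac_sums ξ η φ hφc]
  have hre : ∑ i, φ (η i) = ∑ i, φ (η (π i)) := (Equiv.sum_comp π fun i => φ (η i)).symm
  rw [hre, ← Finset.sum_sub_distrib]
  apply Finset.sum_le_sum
  intro i _
  calc φ (ξ i) - φ (η (π i)) ≤ |φ (ξ i) - φ (η (π i))| := le_abs_self _
    _ ≤ L * gdist (ξ i) (η (π i)) := hLip _ _
    _ ≤ 1 * gdist (ξ i) (η (π i)) := mul_le_mul_of_nonneg_right hL1 (gdist_nonneg _ _)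
    _ = gdist (ξ i) (η (π i)) := one_mul _


/-- there is a constant `c ≥ 1` such that for every `n` and all points
`ξ₁,…,ξ_n, η₁,…,η_n ∈ T²`, the measure `μ = Σᵢ δ_{ξᵢ} − Σᵢ δ_{ηᵢ}` satisfies
`c⁻¹ min_{π ∈ Sₙ} Σᵢ d(ξᵢ, η_{π(i)}) ≤ ‖μ‖_{M¹} ≤ min_{π ∈ Sₙ} Σᵢ d(ξᵢ, η_{π(i)})`. -/
theorem M1norm_dirac_difference_equiv_min_matching :
    ∃ c : ℝ, 1 ≤ c ∧ ∀ (n : ℕ) (ξ η : Fin n → T2),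
      c⁻¹ * (⨅ π : Equiv.Perm (Fin n), ∑ i, gdist (ξ i) (η (π i)))
          ≤ M1norm ((∑ i, diracSM (ξ i)) - ∑ i, diracSM (η i)) ∧
      M1norm ((∑ i, diracSM (ξ i)) - ∑ i, diracSM (η i))
          ≤ ⨅ π : Equiv.Perm (Fin n), ∑ i, gdist (ξ i) (η (π i)) := by
  refine ⟨3, by norm_num, ?_⟩
  intro n ξ η
  set μ := (∑ i, diracSM (ξ i)) - ∑ i, diracSM (η i) with hμ
  set Mset : Set ℝ := {r : ℝ | ∃ φ : T2 → ℝ, ∃ ψ : ℝ × ℝ → ℝ, IsC1 φ ψ ∧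
    (⨆ x : ℝ × ℝ, |ψ x|) + (⨆ x : ℝ × ℝ, ‖fderiv ℝ ψ x‖) ≤ 1 ∧ r = spair μ φ} with hMset
  have hM1 : M1norm μ = sSup Mset := rfl
  -- zero is a test value
  have h0mem : (0 : ℝ) ∈ Mset := by
    refine ⟨fun _ => 0, fun _ => 0, ⟨contDiff_const, fun _ => rfl⟩, ?_, ?_⟩
    · have e1 : (⨆ _ : ℝ × ℝ, |(0:ℝ)|) = 0 := by simp
      have e2 : (⨆ x : ℝ × ℝ, ‖fderiv ℝ (fun _ => (0:ℝ)) x‖) = 0 := by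
        simp [fderiv_const]
      rw [e1, e2]; norm_num
    · simp [spair]
  have hne : Mset.Nonempty := ⟨0, h0mem⟩
  have hbdd : BddAbove Mset := by
    refine ⟨∑ i, gdist (ξ i) (η i), ?_⟩
    rintro r ⟨φ, ψ, h1, h2, rfl⟩
    exact spair_le_matching ξ η φ ψ h1 h2 (Equiv.refl _)
  have hinf_bdd : BddBelow (Set.range fun π : Equiv.Perm (Fin n) =>
      ∑ i, gdist (ξ i) (η (π i))) := by
    refine ⟨0, ?_⟩
    rintro _ ⟨π, rfl⟩
    exact Finset.sum_nonneg fun i _ => gdist_nonneg _ _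
  constructor
  · -- lower bound
    obtain ⟨π₀, _, hπ₀⟩ := Finset.exists_min_image Finset.univ
      (fun π : Equiv.Perm (Fin n) => ∑ i, gdist (ξ i) (η (π i))) ⟨1, Finset.mem_univ 1⟩
    set M₀ := ∑ i, gdist (ξ i) (η (π₀ i)) with hM₀
    have hmin : ∀ σ : Equiv.Perm (Fin n),
        (∑ j, gdist (ξ j) ((fun j => η (π₀ j)) j))
          ≤ ∑ j, gdist (ξ j) ((fun j => η (π₀ j)) (σ j)) := by
      intro σ
      exact hπ₀ (σ.trans π₀) (Finset.mem_univ _)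
    obtain ⟨φ₀, hφ₀lip, hφ₀sum⟩ := exists_potential ξ (fun j => η (π₀ j)) hmin
    set χ : T2 → ℝ := fun z => (3:ℝ)⁻¹ * (φ₀ z - φ₀ (proj 0)) with hχ
    have hχdiff : ∀ p q : T2, χ p - χ q = (3:ℝ)⁻¹ * (φ₀ p - φ₀ q) := by
      intro p q; rw [hχ]; ring
    have hχlip : ∀ p q, |χ p - χ q| ≤ (3:ℝ)⁻¹ * gdist p q := by
      intro p q
      rw [hχdiff p q, abs_mul, abs_of_nonneg (by norm_num : (0:ℝ) ≤ 3⁻¹)]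
      exact mul_le_mul_of_nonneg_left (hφ₀lip p q) (by norm_num)
    have hχbd : ∀ p, |χ p| ≤ (3:ℝ)⁻¹ := by
      intro p
      have h3 : |χ p - χ (proj 0)| ≤ (3:ℝ)⁻¹ * gdist p (proj 0) := hχlip p (proj 0)
      have h4 : χ (proj 0) = 0 := by rw [hχ]; simp
      rw [h4, sub_zero] at h3
      calc |χ p| ≤ (3:ℝ)⁻¹ * gdist p (proj 0) := h3
        _ ≤ (3:ℝ)⁻¹ * 1 := mul_le_mul_of_nonneg_left (gdist_le_one _ _) (by norm_num)
        _ = 3⁻¹ := mul_one _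
    have hχc : Continuous χ := by
      have hlip : LipschitzWith (Real.toNNReal ((3:ℝ)⁻¹ * Real.sqrt 2)) χ := by
        apply LipschitzWith.of_dist_le_mul
        intro p q
        rw [Real.coe_toNNReal _ (by positivity), Real.dist_eq]
        calc |χ p - χ q| ≤ (3:ℝ)⁻¹ * gdist p q := hχlip p q
          _ ≤ (3:ℝ)⁻¹ * (Real.sqrt 2 * dist p q) :=
              mul_le_mul_of_nonneg_left (gdist_le_sqrt2_dist p q) (by norm_num)
          _ = (3:ℝ)⁻¹ * Real.sqrt 2 * dist p q := by ring
      exact hlip.continuous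
    have hχsum : (3:ℝ)⁻¹ * M₀ ≤ (∑ i, χ (ξ i)) - ∑ i, χ (η i) := by
      have h5 : ∑ i, χ (η (π₀ i)) = ∑ i, χ (η i) := Equiv.sum_comp π₀ fun i => χ (η i)
      have h6 : (∑ i, χ (ξ i)) - ∑ i, χ (η (π₀ i))
          = (3:ℝ)⁻¹ * ((∑ i, φ₀ (ξ i)) - ∑ i, φ₀ (η (π₀ i))) := by
        rw [← Finset.sum_sub_distrib, ← Finset.sum_sub_distrib, Finset.mul_sum]
        exact Finset.sum_congr rfl fun i _ => hχdiff _ _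
      rw [← h5, h6]
      exact mul_le_mul_of_nonneg_left hφ₀sum (by norm_num)
    have hkey : ∀ ε > (0:ℝ), (3:ℝ)⁻¹ * M₀ ≤ M1norm μ + ε := by
      intro ε hε
      set δ : ℝ := Real.sqrt 2 * 3⁻¹ with hδ
      have hδ0 : 0 < δ := by rw [hδ]; positivity
      set r : ℝ := ε / (δ * (2 * n) + 1) with hrdef
      have hr : 0 < r := by
        apply div_pos hε
        positivity
      obtain ⟨φr, ψr, hC1, hφrc, hbd1, hbd2, happrox⟩ :=
        mollify χ hχc 3⁻¹ (by norm_num) hχlip 3⁻¹ hχbd r hr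
      rw [← hδ] at happrox
      have hcon : (⨆ x : ℝ × ℝ, |ψr x|) + (⨆ x : ℝ × ℝ, ‖fderiv ℝ ψr x‖) ≤ 1 := by
        have hs1 : (⨆ x : ℝ × ℝ, |ψr x|) ≤ 3⁻¹ := Real.iSup_le hbd1 (by norm_num)
        have hs2 : (⨆ x : ℝ × ℝ, ‖fderiv ℝ ψr x‖) ≤ Real.sqrt 2 * 3⁻¹ :=
          Real.iSup_le hbd2 (by positivity)
        have hsq : Real.sqrt 2 ≤ 2 := by
          nlinarith [Real.sq_sqrt (show (0:ℝ) ≤ 2 by norm_num), Real.sqrt_nonneg 2]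
        linarith
      have hmem : spair μ φr ∈ Mset := ⟨φr, ψr, hC1, hcon, rfl⟩
      have hle : spair μ φr ≤ M1norm μ := by
        rw [hM1]; exact le_csSup hbdd hmem
      have hval : spair μ φr = (∑ i, φr (ξ i)) - ∑ i, φr (η i) :=
        spair_dirac_sums ξ η φr hφrc
      have happ : ∀ z, χ z - δ * r ≤ φr z ∧ φr z ≤ χ z + δ * r := by
        intro z
        have := happrox z
        rw [abs_le] at this
        constructor <;> [linarith [this.1]; linarith [this.2]]
      have hsum1 : (∑ i, χ (ξ i)) - n * (δ * r) ≤ ∑ i, φr (ξ i) := by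
        have := Finset.sum_le_sum (fun i (_ : i ∈ Finset.univ) => (happ (ξ i)).1)
        rw [Finset.sum_sub_distrib, Finset.sum_const, Finset.card_univ] at this
        simpa using this
      have hsum2 : (∑ i, φr (η i)) ≤ (∑ i, χ (η i)) + n * (δ * r) := by
        have := Finset.sum_le_sum (fun i (_ : i ∈ Finset.univ) => (happ (η i)).2)
        rw [Finset.sum_add_distrib, Finset.sum_const, Finset.card_univ] at this
        simpa using this
      have hrbound : 2 * ((n : ℝ) * (δ * r)) ≤ ε := by
        have h8 : 2 * ((n : ℝ) * (δ * r)) = (δ * (2 * n)) * ε / (δ * (2 * n) + 1) := by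
          rw [hrdef]; ring
        rw [h8, div_le_iff₀ (by positivity)]
        nlinarith [hδ0.le, hε.le, Nat.cast_nonneg (α := ℝ) n]
      linarith [hχsum]
    have hlow : (3:ℝ)⁻¹ * M₀ ≤ M1norm μ := le_of_forall_pos_le_add hkey
    have hinf_le : (⨅ π : Equiv.Perm (Fin n), ∑ i, gdist (ξ i) (η (π i))) ≤ M₀ :=
      ciInf_le hinf_bdd π₀
    calc (3:ℝ)⁻¹ * (⨅ π : Equiv.Perm (Fin n), ∑ i, gdist (ξ i) (η (π i)))
        ≤ (3:ℝ)⁻¹ * M₀ := mul_le_mul_of_nonneg_left hinf_le (by norm_num)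
      _ ≤ M1norm μ := hlow
  · -- upper bound
    apply le_ciInf
    intro π
    rw [hM1]
    apply csSup_le hne
    rintro r ⟨φ, ψ, h1, h2, rfl⟩
    exact spair_le_matching ξ η φ ψ h1 h2 π
end
end

section
/- Let Ω ⊆ ℝ² be open and connected, and let H, H̃: Ω → ℂ be continuously differentiable maps with |H(x)| = |H̃(x)| = 1 for all x ∈ Ω. If j(H̃) = j(H) on Ω, then there exists α ∈ ℝ such that H̃ = e^{iα} H on Ω. -/
noncomputable section

/-- The planar unit directions indexed by `Fin 2`. -/
def dir2 : Fin 2 → ℝ × ℝ := ![(1, 0), (0, 1)]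

/-- The real inner product on `ℂ ≃ ℝ²`: `a·b = Re(ā b)`. -/
def rdot (a b : ℂ) : ℝ := ((starRingEnd ℂ) a * b).re

/-- The current `jᵏ(u) = (iu)·∂_{x_k}u` of a map `u : ℝ² → ℂ`. -/
def jcur (u : ℝ × ℝ → ℂ) (k : Fin 2) (x : ℝ × ℝ) : ℝ :=
  rdot (Complex.I * u x) (fderiv ℝ u x (dir2 k))

private lemma jcur_eq_im (u : ℝ × ℝ → ℂ) (k : Fin 2) (x : ℝ × ℝ) :
    jcur u k x = ((starRingEnd ℂ) (u x) * fderiv ℝ u x (dir2 k)).im := by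
  simp only [jcur, rdot, map_mul, Complex.conj_I, Complex.mul_re, Complex.mul_im,
    Complex.neg_re, Complex.neg_im, Complex.I_re, Complex.I_im, Complex.conj_re,
    Complex.conj_im]
  ring


private lemma normSq_one {z : ℂ} (h : ‖z‖ = 1) : Complex.normSq z = 1 := by
  rw [Complex.normSq_eq_norm_sq, h]; norm_num

private lemma conj_mul_self_one {z : ℂ} (h : ‖z‖ = 1) : (starRingEnd ℂ) z * z = 1 := by
  rw [mul_comm, Complex.mul_conj, normSq_one h]; norm_num

/-- derivative of a conjugated map -/
private lemma hasFDerivAt_conj {u : ℝ × ℝ → ℂ} {D : (ℝ × ℝ) →L[ℝ] ℂ} {x : ℝ × ℝ}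
    (h : HasFDerivAt u D x) :
    HasFDerivAt (fun y => (starRingEnd ℂ) (u y))
      ((Complex.conjCLE.toContinuousLinearMap).comp D) x :=
  (Complex.conjCLE.toContinuousLinearMap.hasFDerivAt).comp x h

/-- If `‖u‖ = 1` near `x` and `u` is differentiable at `x`, then
`conj (u x) * Du v + u x * conj (Du v) = 0`. -/
private lemma key_orth {u : ℝ × ℝ → ℂ} {D : (ℝ × ℝ) →L[ℝ] ℂ} {x : ℝ × ℝ}
    (hD : HasFDerivAt u D x) (h1 : ∀ᶠ y in nhds x, ‖u y‖ = 1) (v : ℝ × ℝ) :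
    (starRingEnd ℂ) (u x) * D v + u x * (starRingEnd ℂ) (D v) = 0 := by
  have hmul : HasFDerivAt (fun y => (starRingEnd ℂ) (u y) * u y)
      ((starRingEnd ℂ) (u x) • D + u x • ((Complex.conjCLE.toContinuousLinearMap).comp D)) x :=
    (hasFDerivAt_conj hD).mul hD
  have hconst : HasFDerivAt (fun y => (starRingEnd ℂ) (u y) * u y)
      (0 : (ℝ × ℝ) →L[ℝ] ℂ) x := by
    have heq : (fun y => (starRingEnd ℂ) (u y) * u y) =ᶠ[nhds x] (fun _ => (1 : ℂ)) := by
      filter_upwards [h1] with y hy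
      exact conj_mul_self_one hy
    exact (hasFDerivAt_const (1 : ℂ) x).congr_of_eventuallyEq heq
  have h0 := hmul.unique hconst
  have := congrArg (fun L : (ℝ × ℝ) →L[ℝ] ℂ => L v) h0
  simpa [smul_eq_mul, mul_comm] using this

/-- if `Ω ⊆ ℝ²` is open and connected, `H, H̃ : Ω → ℂ` are `C¹` with
`|H| = |H̃| = 1` on `Ω`, and `j(H̃) = j(H)` on `Ω`, then `H̃ = e^{iα} H` on `Ω`
for some `α ∈ ℝ`. -/
theorem unit_maps_with_equal_current_differ_by_phase
    (Ω : Set (ℝ × ℝ)) (hΩo : IsOpen Ω) (hΩc : IsConnected Ω)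
    (H Ht : ℝ × ℝ → ℂ)
    (hH : ContDiffOn ℝ 1 H Ω) (hHt : ContDiffOn ℝ 1 Ht Ω)
    (hH1 : ∀ x ∈ Ω, ‖H x‖ = 1) (hHt1 : ∀ x ∈ Ω, ‖Ht x‖ = 1)
    (hj : ∀ x ∈ Ω, ∀ k : Fin 2, jcur Ht k x = jcur H k x) :
    ∃ α : ℝ, ∀ x ∈ Ω, Ht x = Complex.exp ((α : ℂ) * Complex.I) * H x := by
  classical
  set f : ℝ × ℝ → ℂ := fun y => Ht y * (starRingEnd ℂ) (H y) with hf
  -- the function f has zero derivative at every point of Ω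
  have hzero : ∀ x ∈ Ω, HasFDerivAt f (0 : (ℝ × ℝ) →L[ℝ] ℂ) x := by
    intro x hx
    have hnx : Ω ∈ nhds x := hΩo.mem_nhds hx
    have hdH : DifferentiableAt ℝ H x := (hH.contDiffAt hnx).differentiableAt one_ne_zero
    have hdHt : DifferentiableAt ℝ Ht x := (hHt.contDiffAt hnx).differentiableAt one_ne_zero
    set D2 := fderiv ℝ H x with hD2
    set D1 := fderiv ℝ Ht x with hD1
    have hDH : HasFDerivAt H D2 x := hdH.hasFDerivAt
    have hDHt : HasFDerivAt Ht D1 x := hdHt.hasFDerivAt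
    have h1 : ∀ᶠ y in nhds x, ‖H y‖ = 1 := by filter_upwards [hnx] with y hy using hH1 y hy
    have h1t : ∀ᶠ y in nhds x, ‖Ht y‖ = 1 := by filter_upwards [hnx] with y hy using hHt1 y hy
    have e4 : ∀ v, (starRingEnd ℂ) (H x) * D2 v + H x * (starRingEnd ℂ) (D2 v) = 0 :=
      key_orth hDH h1
    have e4t : ∀ v, (starRingEnd ℂ) (Ht x) * D1 v + Ht x * (starRingEnd ℂ) (D1 v) = 0 :=
      key_orth hDHt h1t
    have e1 : (starRingEnd ℂ) (H x) * H x = 1 := conj_mul_self_one (hH1 x hx)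
    have e2 : (starRingEnd ℂ) (Ht x) * Ht x = 1 := conj_mul_self_one (hHt1 x hx)
    -- equal currents: for the basis directions, then all directions
    have hre : ∀ v, ((starRingEnd ℂ) (H x) * D2 v).re = 0 := by
      intro v
      have := congrArg Complex.re (e4 v)
      have h2 : (H x * (starRingEnd ℂ) (D2 v)).re = ((starRingEnd ℂ) (H x) * D2 v).re := by
        simp only [Complex.mul_re, Complex.conj_re, Complex.conj_im]; ring
      simp only [Complex.add_re, Complex.zero_re] at this
      linarith [this, h2]
    have hret : ∀ v, ((starRingEnd ℂ) (Ht x) * D1 v).re = 0 := by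
      intro v
      have := congrArg Complex.re (e4t v)
      have h2 : (Ht x * (starRingEnd ℂ) (D1 v)).re = ((starRingEnd ℂ) (Ht x) * D1 v).re := by
        simp only [Complex.mul_re, Complex.conj_re, Complex.conj_im]; ring
      simp only [Complex.add_re, Complex.zero_re] at this
      linarith [this, h2]
    have him : ∀ k : Fin 2,
        ((starRingEnd ℂ) (Ht x) * D1 (dir2 k)).im = ((starRingEnd ℂ) (H x) * D2 (dir2 k)).im := by
      intro k
      have := hj x hx k
      rwa [jcur_eq_im, jcur_eq_im, ← hD1, ← hD2] at this
    have e3 : ∀ v, (starRingEnd ℂ) (Ht x) * D1 v = (starRingEnd ℂ) (H x) * D2 v := by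
      intro v
      have hv : v = v.1 • dir2 0 + v.2 • dir2 1 := by
        simp [dir2, Prod.ext_iff]
      apply Complex.ext
      · rw [hret v, hre v]
      · rw [hv]
        simp only [map_add, map_smul, mul_add, mul_smul_comm, Complex.add_im,
          Complex.smul_im, smul_eq_mul]
        rw [him 0, him 1]
    -- derivative of f
    have hFf : HasFDerivAt f
        (Ht x • ((Complex.conjCLE.toContinuousLinearMap).comp D2) + (starRingEnd ℂ) (H x) • D1)
        x := hDHt.mul (hasFDerivAt_conj hDH)
    have hF0 : (Ht x • ((Complex.conjCLE.toContinuousLinearMap).comp D2)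
        + (starRingEnd ℂ) (H x) • D1) = (0 : (ℝ × ℝ) →L[ℝ] ℂ) := by
      refine ContinuousLinearMap.ext fun v => ?_
      have h3 := e3 v
      have h4 := e4 v
      simp only [ContinuousLinearMap.add_apply, ContinuousLinearMap.smul_apply,
        ContinuousLinearMap.comp_apply, ContinuousLinearEquiv.coe_coe,
        Complex.conjCLE_apply, smul_eq_mul, ContinuousLinearMap.zero_apply]
      linear_combination ((starRingEnd ℂ) (H x) * Ht x) * h3
        - ((starRingEnd ℂ) (H x) * D1 v) * e2 + (Ht x * (starRingEnd ℂ) (H x)) * h4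
        - (Ht x * (starRingEnd ℂ) (D2 v)) * e1
    rwa [hF0] at hFf
  -- f is locally constant on Ω (as a function on the subtype)
  have hΩc' : PreconnectedSpace Ω := Subtype.preconnectedSpace hΩc.isPreconnected
  set g : Ω → ℂ := fun p => f p.1 with hg
  have hlc : IsLocallyConstant g := by
    rw [IsLocallyConstant.iff_exists_open]
    rintro ⟨x, hx⟩
    obtain ⟨ε, hε, hball⟩ := Metric.isOpen_iff.1 hΩo x hx
    refine ⟨Subtype.val ⁻¹' Metric.ball x ε, (Metric.isOpen_ball).preimage continuous_subtype_val,
      Metric.mem_ball_self hε, ?_⟩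
    rintro ⟨y, hy⟩ hyb
    have hconv : Convex ℝ (Metric.ball x ε) := convex_ball x ε
    have hdiff : DifferentiableOn ℝ f (Metric.ball x ε) := fun z hz =>
      ((hzero z (hball hz)).differentiableAt).differentiableWithinAt
    have hfd : ∀ z ∈ Metric.ball x ε, fderivWithin ℝ f (Metric.ball x ε) z = 0 := by
      intro z hz
      rw [fderivWithin_of_isOpen Metric.isOpen_ball hz]
      exact (hzero z (hball hz)).fderiv
    exact hconv.is_const_of_fderivWithin_eq_zero hdiff hfd hyb (Metric.mem_ball_self hε)
  -- so f is constant on Ω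
  obtain ⟨x0, hx0⟩ := hΩc.nonempty
  have hconst : ∀ x ∈ Ω, f x = f x0 := fun x hx =>
    hlc.apply_eq_of_preconnectedSpace ⟨x, hx⟩ ⟨x0, hx0⟩
  -- the constant is a phase
  have habs : ‖f x0‖ = 1 := by
    have : ‖f x0‖
        = ‖Ht x0‖ * ‖(starRingEnd ℂ) (H x0)‖ := norm_mul _ _
    rw [this, Complex.norm_conj,
      hHt1 x0 hx0, hH1 x0 hx0, mul_one]
  refine ⟨(f x0).arg, fun x hx => ?_⟩
  have hexp : Complex.exp (((f x0).arg : ℂ) * Complex.I) = f x0 := by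
    have := Complex.norm_mul_exp_arg_mul_I (f x0)
    rwa [habs, Complex.ofReal_one, one_mul] at this
  rw [hexp, ← hconst x hx]
  have e1 : (starRingEnd ℂ) (H x) * H x = 1 := conj_mul_self_one (hH1 x hx)
  calc Ht x = Ht x * ((starRingEnd ℂ) (H x) * H x) := by rw [e1, mul_one]
    _ = f x * H x := by rw [hf]; ring
end
end
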